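/- Let h ∈ ℚ⟦t⟧ with h(0) = 0 and c_m = m! · [t^m] h, where c_1 = 1, and let c ∈ ℚ. Define p_n(x) = n! · [t^n] exp(x·h(t)). Then for all n ≥ 0, (x + c·n) · p_n(x) = x · \left( p_n(x) + c \sum_{j=1}^{n} \binom{n}{j} j · c_j · p_{n-j}(x) \right) as polynomials in x. -/

import Mathlib

open PowerSeries

/-- `expComp g = exp(g)` for a power series `g` with zero constant term:
the `n`-th coefficient is `∑_{j=0}^{n} [tⁿ](gʲ)/j!`. -/
noncomputable def expComp {A : Type*} [CommRing A] [Algebra ℚ A] (g : PowerSeries A) :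
    PowerSeries A :=
  PowerSeries.mk fun n =>
    ∑ j ∈ Finset.range (n + 1), ((j.factorial : ℚ)⁻¹) • (PowerSeries.coeff (R := A) n (g ^ j))



section Aux
open Finset
variable {A : Type*} [CommRing A] [Algebra ℚ A]

lemma coeff_pow_zero (g : A⟦X⟧) (hg : constantCoeff (R := A) g = 0) {m j : ℕ} (hmj : m < j) :
    coeff (R := A) m (g ^ j) = 0 := by
  have h1 : (X : A⟦X⟧) ∣ g := X_dvd_iff.mpr hg
  have h2 : (X : A⟦X⟧) ^ j ∣ g ^ j := pow_dvd_pow_of_dvd h1 j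
  exact X_pow_dvd_iff.mp h2 m hmj

lemma expComp_deriv (g : A⟦X⟧) (hg : constantCoeff (R := A) g = 0) :
    derivativeFun (expComp g) = expComp g * derivativeFun g := by
  ext n
  rw [show coeff (R := A) n (derivativeFun (expComp g)) = coeff (R := A) (n + 1) (expComp g) * ((n : A) + 1) from coeff_derivativeFun _ n]
  have hstep : ∀ j : ℕ, coeff (R := A) (n + 1) (g ^ j) * ((n : A) + 1)
      = j • coeff (R := A) n (g ^ (j - 1) * derivativeFun g) := by
    intro j
    rw [show coeff (R := A) (n + 1) (g ^ j) * ((n : A) + 1) = coeff (R := A) n (derivativeFun (g ^ j)) from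
      (coeff_derivativeFun _ n).symm]
    rw [show derivativeFun (g ^ j) = (PowerSeries.derivative A) (g ^ j) from rfl,
      Derivation.leibniz_pow, map_nsmul, smul_eq_mul]
    rfl
  calc (coeff (R := A) (n+1) (expComp g)) * ((n:A) + 1)
      = ∑ j ∈ range (n + 2), ((j.factorial : ℚ)⁻¹) • (coeff (R := A) (n+1) (g ^ j) * ((n:A)+1)) := by
        simp only [expComp, coeff_mk, Finset.sum_mul, smul_mul_assoc]
    _ = ∑ j ∈ range (n + 2), ((j.factorial : ℚ)⁻¹) •
          (j • coeff (R := A) n (g ^ (j - 1) * derivativeFun g)) := by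
        simp_rw [hstep]
    _ = ∑ i ∈ range (n + 1), ((i.factorial : ℚ)⁻¹) •
          coeff (R := A) n (g ^ i * derivativeFun g) := by
        rw [Finset.sum_range_succ']
        simp only [zero_smul, smul_zero, add_zero, Nat.add_sub_cancel]
        refine Finset.sum_congr rfl fun i _ => ?_
        have hns : (i + 1) • coeff (R := A) n (g ^ i * derivativeFun g)
            = ((i : ℚ) + 1) • coeff (R := A) n (g ^ i * derivativeFun g) := by
          rw [← Nat.cast_smul_eq_nsmul ℚ]; norm_cast
        rw [hns, smul_smul]
        congr 1
        rw [Nat.factorial_succ]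
        have h0 : ((i.factorial : ℚ)) ≠ 0 := Nat.cast_ne_zero.mpr i.factorial_ne_zero
        field_simp
        push_cast; ring
    _ = ∑ i ∈ range (n + 1), ∑ ab ∈ Finset.HasAntidiagonal.antidiagonal n,
          ((i.factorial : ℚ)⁻¹) • (coeff (R := A) ab.1 (g ^ i) * coeff (R := A) ab.2 (derivativeFun g)) := by
        simp_rw [coeff_mul, Finset.smul_sum]
    _ = ∑ ab ∈ Finset.HasAntidiagonal.antidiagonal n, (∑ i ∈ range (n + 1),
          ((i.factorial : ℚ)⁻¹) • coeff (R := A) ab.1 (g ^ i)) * coeff (R := A) ab.2 (derivativeFun g) := by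
        rw [Finset.sum_comm]
        exact Finset.sum_congr rfl fun ab _ => by rw [Finset.sum_mul]; simp [smul_mul_assoc]
    _ = coeff (R := A) n (expComp g * derivativeFun g) := by
        rw [coeff_mul]
        refine Finset.sum_congr rfl fun ab hab => ?_
        congr 1
        have hle : ab.1 ≤ n := by
          have := Finset.HasAntidiagonal.antidiagonal.fst_le hab
          omega
        rw [expComp, coeff_mk]
        symm
        apply Finset.sum_subset
        · exact Finset.range_subset_range.mpr (by omega)
        · intro i _ hi
          rw [coeff_pow_zero g hg (by simp at hi ⊢; omega), smul_zero]

lemma expComp_deriv_coeff (g : A⟦X⟧) (hg : constantCoeff (R := A) g = 0) (m : ℕ) :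
    coeff (R := A) (m + 1) (expComp g) * ((m : A) + 1) =
      ∑ b ∈ Finset.range (m + 1),
        (coeff (R := A) (b + 1) g * ((b : A) + 1)) * coeff (R := A) (m - b) (expComp g) := by
  have h1 : coeff (R := A) m (derivativeFun (expComp g)) = coeff (R := A) (m + 1) (expComp g) * ((m : A) + 1) :=
    coeff_derivativeFun _ m
  rw [← h1, expComp_deriv g hg, mul_comm (expComp g), coeff_mul,
    Finset.Nat.sum_antidiagonal_eq_sum_range_succ_mk]
  exact Finset.sum_congr rfl fun b _ => by rw [show ∀ k, coeff (R := A) k (derivativeFun g) = coeff (R := A) (k + 1) g * ((k : A) + 1) from fun k => coeff_derivativeFun g k]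

end Aux

theorem stmt12 {A : Type*} [CommRing A] [Algebra ℚ A] (h : PowerSeries ℚ)
    (hh : PowerSeries.constantCoeff (R := ℚ) h = 0) (c' : ℕ → ℚ)
    (hc : ∀ m, c' m = (m.factorial : ℚ) * PowerSeries.coeff (R := ℚ) m h) (hc1 : c' 1 = 1)
    (c : ℚ) (p : ℕ → A → A)
    (hp : ∀ n x, p n x = (n.factorial : A) *
      PowerSeries.coeff (R := A) n (expComp (PowerSeries.C (R := A) x * h.map (algebraMap ℚ A))))
    (n : ℕ) (x : A) :
    (x + algebraMap ℚ A c * (n : A)) * p n x =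
      x * (p n x + algebraMap ℚ A c * ∑ j ∈ Finset.Icc 1 n,
        (n.choose j : A) * (j : A) * algebraMap ℚ A (c' j) * p (n - j) x) := by
  have hg : constantCoeff (R := A) (C (R := A) x * h.map (algebraMap ℚ A)) = 0 := by
    rw [map_mul]
    have : constantCoeff (R := A) (h.map (algebraMap ℚ A)) = 0 := by
      rw [← coeff_zero_eq_constantCoeff_apply, PowerSeries.coeff_map,
        coeff_zero_eq_constantCoeff_apply, hh, map_zero]
    rw [this, mul_zero]
  have key : (n : A) * p n x = x * ∑ j ∈ Finset.Icc 1 n,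
      (n.choose j : A) * (j : A) * algebraMap ℚ A (c' j) * p (n - j) x := by
    cases n with
    | zero => simp
    | succ m =>
      have hd := expComp_deriv_coeff (C (R := A) x * h.map (algebraMap ℚ A)) hg m
      rw [← Finset.Ico_add_one_right_eq_Icc, Finset.sum_Ico_eq_sum_range]
      simp only [Nat.add_sub_cancel, show m + 1 + 1 - 1 = m + 1 from rfl]
      rw [hp]
      have hL : ((m + 1 : ℕ) : A) * (((m + 1).factorial : A) *
          coeff (R := A) (m + 1) (expComp (C (R := A) x * h.map (algebraMap ℚ A)))) =
          (((m + 1).factorial : A) *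
          (coeff (R := A) (m + 1) (expComp (C (R := A) x * h.map (algebraMap ℚ A))) * ((m : A) + 1))) := by
        push_cast; ring
      rw [hL, hd, Finset.mul_sum, Finset.mul_sum]
      refine Finset.sum_congr rfl fun b hb => ?_
      have hble : b ≤ m := by simpa using Finset.mem_range_succ_iff.mp hb
      rw [Nat.add_comm 1 b, hp]
      have hsub : m + 1 - (b + 1) = m - b := by omega
      rw [hsub, coeff_C_mul, PowerSeries.coeff_map, hc (b + 1), map_mul, map_natCast]
      have hch : (m + 1).choose (b + 1) * (b + 1).factorial * (m - b).factorial
          = (m + 1).factorial := by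
        have := Nat.choose_mul_factorial_mul_factorial (show b + 1 ≤ m + 1 by omega)
        rwa [show m + 1 - (b + 1) = m - b by omega] at this
      have hchA : (((m + 1).choose (b + 1) : A)) * ((b + 1).factorial : A)
          * ((m - b).factorial : A) = ((m + 1).factorial : A) := by
        exact_mod_cast congrArg (Nat.cast : ℕ → A) hch
      rw [← hchA]
      push_cast
      ring
  linear_combination (algebraMap ℚ A c) * key
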